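/- Let Γ be a countable group and μ an irreducible probability measure on Γ with spectral radius ρ(μ). Then there exists a function h : Γ → (0, ∞) that is ρ(μ)-subharmonic for μ, i.e., ∑_{y ∈ Γ} μ(x^{-1}y) h(y) ≤ ρ(μ) · h(x) for every x ∈ Γ. -/

import Mathlib

open Filter Topology
open scoped Pointwise Classical

/-- The `n`-th convolution power of a (probability) function `μ` on a group. -/
noncomputable def convPow {G : Type*} [Group G] (μ : G → ℝ) : ℕ → G → ℝ
  | 0 => fun x => if x = 1 then 1 else 0
  | n + 1 => fun x => ∑' y : G, μ y * convPow μ n (y⁻¹ * x)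

/-- The support `S_μ = {x : μ(x) > 0}`. -/
def msupp {G : Type*} [Group G] (μ : G → ℝ) : Set G := {g : G | 0 < μ g}

/-- `Γ₀ = ⋃_{k ≥ 1} S_μ^{-k} S_μ^{k}`. -/
def Gamma0 {G : Type*} [Group G] (μ : G → ℝ) : Set G :=
  ⋃ k ≥ 1, (msupp μ ^ k)⁻¹ * msupp μ ^ k

/-- `μ` is a probability measure on the countable group `G`. -/
def IsProbMeas {G : Type*} [Group G] (μ : G → ℝ) : Prop :=
  (∀ x, 0 ≤ μ x) ∧ ∑' x : G, μ x = 1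

/-- Irreducibility: the semigroup generated by the support is the whole group,
`⋃_{n ≥ 1} S_μ^n = Γ`. -/
def IsIrreducibleMeas {G : Type*} [Group G] (μ : G → ℝ) : Prop :=
  ∀ x : G, ∃ n : ℕ, 0 < n ∧ x ∈ msupp μ ^ n

/-- `d` is the period of `μ`, i.e. `d = gcd {n ∈ ℕ : μ⁽ⁿ⁾(e) > 0}`, characterized by:
`d` divides every element of the set, and every common divisor of the set divides `d`. -/
def IsPeriodOf {G : Type*} [Group G] (μ : G → ℝ) (d : ℕ) : Prop :=
  (∀ n : ℕ, 0 < n → 0 < convPow μ n 1 → d ∣ n) ∧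
  (∀ c : ℕ, (∀ n : ℕ, 0 < n → 0 < convPow μ n 1 → c ∣ n) → c ∣ d)

section aux
variable {G : Type*} [Group G] {μ : G → ℝ}

lemma convPow_nonneg (hμ : ∀ x, 0 ≤ μ x) : ∀ (n : ℕ) (x : G), 0 ≤ convPow μ n x
  | 0, x => by simp only [convPow]; split <;> norm_num
  | n+1, x => by
      simp only [convPow]
      exact tsum_nonneg fun y => mul_nonneg (hμ y) (convPow_nonneg hμ n _)

lemma summable_mu (hprob : IsProbMeas μ) : Summable μ := by
  by_contra hs
  have h0 := tsum_eq_zero_of_not_summable hs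
  have h1 := hprob.2
  rw [h0] at h1; norm_num at h1

lemma convPow_le_one (hprob : IsProbMeas μ) : ∀ (n : ℕ) (x : G), convPow μ n x ≤ 1
  | 0, x => by simp only [convPow]; split <;> norm_num
  | n+1, x => by
      simp only [convPow]
      calc ∑' y, μ y * convPow μ n (y⁻¹ * x) ≤ ∑' y, μ y := by
            refine Summable.tsum_le_tsum (fun y => ?_) ?_ (summable_mu hprob)
            · exact mul_le_of_le_one_right (hprob.1 y) (convPow_le_one hprob n _)
            · exact Summable.of_nonneg_of_le
                (fun y => mul_nonneg (hprob.1 y) (convPow_nonneg hprob.1 n _))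
                (fun y => mul_le_of_le_one_right (hprob.1 y) (convPow_le_one hprob n _))
                (summable_mu hprob)
        _ = 1 := hprob.2

lemma summable_term (hprob : IsProbMeas μ) (n : ℕ) (x : G) :
    Summable (fun y => μ y * convPow μ n (y⁻¹ * x)) :=
  Summable.of_nonneg_of_le
    (fun y => mul_nonneg (hprob.1 y) (convPow_nonneg hprob.1 n _))
    (fun y => mul_le_of_le_one_right (hprob.1 y) (convPow_le_one hprob n _))
    (summable_mu hprob)

lemma term_le (hprob : IsProbMeas μ) (n : ℕ) (x y : G) :
    μ y * convPow μ n (y⁻¹ * x) ≤ convPow μ (n+1) x := by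
  have := Summable.le_tsum (summable_term hprob n x) y
    (fun b _ => mul_nonneg (hprob.1 b) (convPow_nonneg hprob.1 n _))
  simpa only [convPow] using this

lemma convPow_supermul (hprob : IsProbMeas μ) :
    ∀ (n m : ℕ) (a b : G), convPow μ n a * convPow μ m b ≤ convPow μ (n + m) (a * b)
  | 0, m, a, b => by
      by_cases h : a = 1
      · subst h; simp [convPow]
      · simp only [convPow, if_neg h, zero_mul]
        exact convPow_nonneg hprob.1 _ _
  | n+1, m, a, b => by
      have key : ∀ y : G, μ y * convPow μ n (y⁻¹*a) * convPow μ m b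
          ≤ μ y * convPow μ (n+m) (y⁻¹*(a*b)) := fun y => by
        rw [mul_assoc, ← mul_assoc y⁻¹ a b]
        exact mul_le_mul_of_nonneg_left (convPow_supermul hprob n m (y⁻¹*a) b) (hprob.1 y)
      calc convPow μ (n+1) a * convPow μ m b
          = ∑' y, μ y * convPow μ n (y⁻¹*a) * convPow μ m b := by
            simp only [convPow]; exact (tsum_mul_right).symm
        _ ≤ ∑' y, μ y * convPow μ (n+m) (y⁻¹*(a*b)) :=
            Summable.tsum_le_tsum key ((summable_term hprob n a).mul_right _)
              (summable_term hprob (n+m) (a*b))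
        _ = convPow μ (n+1+m) (a*b) := by
            rw [show n+1+m = (n+m)+1 from by ring]; simp only [convPow]

lemma pos_of_mem_pow (hprob : IsProbMeas μ) :
    ∀ (n : ℕ) (x : G), x ∈ msupp μ ^ n → 0 < convPow μ n x
  | 0, x, hx => by
      rw [pow_zero, Set.mem_one] at hx
      simp [convPow, hx]
  | n+1, x, hx => by
      rw [pow_succ'] at hx
      obtain ⟨v, hv, u, hu, rfl⟩ := hx
      have hv' : 0 < μ v := hv
      have h1 : 0 < μ v * convPow μ n u := mul_pos hv' (pos_of_mem_pow hprob n u hu)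
      have h2 := term_le hprob n (v*u) v
      rw [inv_mul_cancel_left] at h2
      exact lt_of_lt_of_le h1 h2

end aux

section rho
variable {G : Type*} [Group G] {μ : G → ℝ} {ρ : ℝ}

lemma rho_bdd (hprob : IsProbMeas μ) :
    IsBoundedUnder (· ≤ ·) atTop (fun n : ℕ => (convPow μ n 1 : ℝ) ^ ((n : ℝ)⁻¹)) :=
  isBoundedUnder_of ⟨1, fun n => Real.rpow_le_one (convPow_nonneg hprob.1 n 1)
    (convPow_le_one hprob n 1) (by positivity)⟩

lemma rho_nonneg (hprob : IsProbMeas μ)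
    (hρ : ρ = Filter.limsup (fun n : ℕ => (convPow μ n 1) ^ ((n : ℝ)⁻¹)) Filter.atTop) :
    0 ≤ ρ := by
  rw [hρ]
  refine le_limsup_of_frequently_le ?_ (rho_bdd hprob)
  exact Frequently.of_forall fun n => Real.rpow_nonneg (convPow_nonneg hprob.1 n 1) _

lemma pow_aux (hprob : IsProbMeas μ) :
    ∀ (j k : ℕ), (convPow μ k (1:G))^j ≤ convPow μ (j*k) 1
  | 0, k => by simp [convPow]
  | j+1, k => by
      calc (convPow μ k (1:G))^(j+1) = (convPow μ k (1:G))^j * convPow μ k 1 := pow_succ _ _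
        _ ≤ convPow μ (j*k) 1 * convPow μ k 1 :=
            mul_le_mul_of_nonneg_right (pow_aux hprob j k) (convPow_nonneg hprob.1 _ _)
        _ ≤ convPow μ (j*k+k) ((1:G)*1) := convPow_supermul hprob _ _ _ _
        _ = convPow μ ((j+1)*k) 1 := by rw [one_mul]; ring_nf

lemma rpow_le_rho (hprob : IsProbMeas μ)
    (hρ : ρ = Filter.limsup (fun n : ℕ => (convPow μ n 1) ^ ((n : ℝ)⁻¹)) Filter.atTop)
    (k : ℕ) (hk : 0 < k) : (convPow μ k (1:G)) ^ ((k:ℝ)⁻¹) ≤ ρ := by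
  have ha0 : 0 ≤ convPow μ k (1:G) := convPow_nonneg hprob.1 _ _
  rw [hρ]
  refine le_limsup_of_frequently_le ?_ (rho_bdd hprob)
  rw [frequently_atTop]
  intro N
  refine ⟨(max 1 N) * k, ?_, ?_⟩
  · calc N ≤ max 1 N := le_max_right _ _
      _ ≤ max 1 N * k := Nat.le_mul_of_pos_right _ hk
  · set j := max 1 N with hj
    have hjpos : 0 < j := lt_of_lt_of_le one_pos (le_max_left _ _)
    have h1 : (convPow μ k (1:G))^j ≤ convPow μ (j*k) 1 := pow_aux hprob j k
    have h2 : ((convPow μ k (1:G))^j) ^ (((j*k : ℕ):ℝ))⁻¹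
        ≤ convPow μ (j*k) 1 ^ (((j*k:ℕ):ℝ))⁻¹ :=
      Real.rpow_le_rpow (by positivity) h1 (by positivity)
    refine le_trans (le_of_eq ?_) h2
    rw [← Real.rpow_natCast (convPow μ k (1:G)) j, ← Real.rpow_mul ha0]
    congr 1
    have hk' : ((k:ℝ)) ≠ 0 := Nat.cast_ne_zero.mpr hk.ne'
    have hj' : ((j:ℝ)) ≠ 0 := Nat.cast_ne_zero.mpr hjpos.ne'
    push_cast
    field_simp

lemma rho_pos (hprob : IsProbMeas μ) (hirr : IsIrreducibleMeas μ)
    (hρ : ρ = Filter.limsup (fun n : ℕ => (convPow μ n 1) ^ ((n : ℝ)⁻¹)) Filter.atTop) :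
    0 < ρ := by
  obtain ⟨k, hk, hmem⟩ := hirr 1
  have h1 : 0 < convPow μ k (1:G) := pos_of_mem_pow hprob k 1 hmem
  exact lt_of_lt_of_le (Real.rpow_pos_of_pos h1 _) (rpow_le_rho hprob hρ k hk)

lemma convPow_one_le (hprob : IsProbMeas μ)
    (hρ : ρ = Filter.limsup (fun n : ℕ => (convPow μ n 1) ^ ((n : ℝ)⁻¹)) Filter.atTop) :
    ∀ k : ℕ, convPow μ k (1:G) ≤ ρ ^ k := by
  intro k
  rcases Nat.eq_zero_or_pos k with hk | hk
  · subst hk; simp [convPow]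
  have ha0 : 0 ≤ convPow μ k (1:G) := convPow_nonneg hprob.1 _ _
  have hc := rpow_le_rho hprob hρ k hk
  have hk' : ((k:ℝ)) ≠ 0 := Nat.cast_ne_zero.mpr hk.ne'
  calc convPow μ k (1:G) = ((convPow μ k (1:G)) ^ ((k:ℝ)⁻¹)) ^ k := by
        rw [← Real.rpow_natCast ((convPow μ k (1:G)) ^ ((k:ℝ)⁻¹)) k, ← Real.rpow_mul ha0,
          inv_mul_cancel₀ hk', Real.rpow_one]
    _ ≤ ρ ^ k := pow_le_pow_left₀ (Real.rpow_nonneg ha0 _) hc k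

lemma exists_C (hprob : IsProbMeas μ) (hirr : IsIrreducibleMeas μ)
    (hρ : ρ = Filter.limsup (fun n : ℕ => (convPow μ n 1) ^ ((n : ℝ)⁻¹)) Filter.atTop)
    (x : G) : ∃ C : ℝ, 0 < C ∧ ∀ n, convPow μ n x ≤ C * ρ ^ n := by
  obtain ⟨m, hm, hmem⟩ := hirr x⁻¹
  have hpos : 0 < convPow μ m x⁻¹ := pos_of_mem_pow hprob m _ hmem
  have hρ0 : 0 < ρ := by
    have := rho_nonneg hprob hρ
    rcases this.lt_or_eq with h | h
    · exact h
    · exfalso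
      have h1 := convPow_one_le hprob hρ
      obtain ⟨k, hk, hmem1⟩ := hirr 1
      have := pos_of_mem_pow hprob k 1 hmem1
      have h2 := h1 k
      rw [← h, zero_pow hk.ne'] at h2
      linarith
  refine ⟨ρ^m / convPow μ m x⁻¹, by positivity, fun n => ?_⟩
  have h1 : convPow μ n x * convPow μ m x⁻¹ ≤ convPow μ (n+m) 1 := by
    simpa using convPow_supermul hprob n m x x⁻¹
  have h2 : convPow μ (n+m) (1:G) ≤ ρ^(n+m) := convPow_one_le hprob hρ _
  rw [div_mul_eq_mul_div, le_div_iff₀ hpos]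
  calc convPow μ n x * convPow μ m x⁻¹ ≤ ρ^(n+m) := h1.trans h2
    _ = ρ^m * ρ^n := by rw [pow_add]; ring

lemma summable_g (hprob : IsProbMeas μ) (hirr : IsIrreducibleMeas μ)
    (hρ : ρ = Filter.limsup (fun n : ℕ => (convPow μ n 1) ^ ((n : ℝ)⁻¹)) Filter.atTop)
    (x : G) {r : ℝ} (hr0 : 0 ≤ r) (hrρ : r * ρ < 1) :
    Summable (fun n : ℕ => convPow μ n x * r ^ n) := by
  obtain ⟨C, hC, hcc⟩ := exists_C hprob hirr hρ x
  have hρ0 : 0 ≤ ρ := rho_nonneg hprob hρ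
  refine Summable.of_nonneg_of_le
    (fun n => mul_nonneg (convPow_nonneg hprob.1 _ _) (pow_nonneg hr0 _)) (fun n => ?_)
    ((summable_geometric_of_lt_one (mul_nonneg hρ0 hr0) (show ρ*r < 1 by rwa [mul_comm])).mul_left C)
  calc convPow μ n x * r^n ≤ C * ρ^n * r^n :=
        mul_le_mul_of_nonneg_right (hcc n) (pow_nonneg hr0 n)
    _ = C * (ρ*r)^n := by rw [mul_pow]; ring

lemma harnack (hprob : IsProbMeas μ) (hirr : IsIrreducibleMeas μ)
    (hρ : ρ = Filter.limsup (fun n : ℕ => (convPow μ n 1) ^ ((n : ℝ)⁻¹)) Filter.atTop)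
    (z w : G) (m : ℕ) {r : ℝ} (hr0 : 0 ≤ r) (hrρ : r * ρ < 1) :
    convPow μ m z * r ^ m * (∑' n : ℕ, convPow μ n w * r^n)
      ≤ ∑' n : ℕ, convPow μ n (z*w) * r^n := by
  have hs := summable_g hprob hirr hρ (z*w) hr0 hrρ
  have hsub : Summable (fun n : ℕ => convPow μ (m+n) (z*w) * r^(m+n)) :=
    hs.comp_injective (add_right_injective m)
  have hterm : ∀ n : ℕ, convPow μ m z * convPow μ n w * r^(m+n)
      ≤ convPow μ (m+n) (z*w) * r^(m+n) := fun n =>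
    mul_le_mul_of_nonneg_right (convPow_supermul hprob m n z w) (pow_nonneg hr0 _)
  calc convPow μ m z * r^m * (∑' n : ℕ, convPow μ n w * r^n)
      = ∑' n : ℕ, convPow μ m z * convPow μ n w * r^(m+n) := by
        rw [← tsum_mul_left]; congr 1; funext n; rw [pow_add]; ring
    _ ≤ ∑' n : ℕ, convPow μ (m+n) (z*w) * r^(m+n) := by
        refine Summable.tsum_le_tsum hterm ?_ hsub
        exact Summable.of_nonneg_of_le
          (fun n => mul_nonneg (mul_nonneg (convPow_nonneg hprob.1 _ _)
            (convPow_nonneg hprob.1 _ _)) (pow_nonneg hr0 _)) hterm hsub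
    _ ≤ ∑' n : ℕ, convPow μ n (z*w) * r^n := by
        refine Summable.tsum_le_tsum_of_inj (fun n => m + n) (add_right_injective m)
          (fun c _ => mul_nonneg (convPow_nonneg hprob.1 _ _) (pow_nonneg hr0 _))
          (fun n => le_rfl) hsub hs

end rho

section core
variable {G : Type*} [Group G] {μ : G → ℝ} {ρ : ℝ}

lemma summable_shift (hprob : IsProbMeas μ) (hirr : IsIrreducibleMeas μ)
    (hρ : ρ = Filter.limsup (fun n : ℕ => (convPow μ n 1) ^ ((n : ℝ)⁻¹)) Filter.atTop)
    (x : G) {r : ℝ} (hr0 : 0 ≤ r) (hrρ : r * ρ < 1) :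
    Summable (fun n : ℕ => convPow μ (n+1) x * r^n) := by
  obtain ⟨C, hC, hcc⟩ := exists_C hprob hirr hρ x
  have hρ0 : 0 ≤ ρ := rho_nonneg hprob hρ
  refine Summable.of_nonneg_of_le
    (fun n => mul_nonneg (convPow_nonneg hprob.1 _ _) (pow_nonneg hr0 _)) (fun n => ?_)
    ((summable_geometric_of_lt_one (mul_nonneg hρ0 hr0)
      (show ρ*r < 1 by rwa [mul_comm])).mul_left (C * ρ))
  calc convPow μ (n+1) x * r^n ≤ C * ρ^(n+1) * r^n :=
        mul_le_mul_of_nonneg_right (hcc (n+1)) (pow_nonneg hr0 n)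
    _ = C * ρ * (ρ*r)^n := by rw [pow_succ, mul_pow]; ring

lemma core (hprob : IsProbMeas μ) (hirr : IsIrreducibleMeas μ)
    (hρ : ρ = Filter.limsup (fun n : ℕ => (convPow μ n 1) ^ ((n : ℝ)⁻¹)) Filter.atTop)
    (x : G) {r : ℝ} (hr0 : 0 < r) (hrρ : r * ρ < 1) (F : Finset G) :
    ∑ y ∈ F, μ (x⁻¹*y) * (∑' n : ℕ, convPow μ n y⁻¹ * r^n)
      ≤ r⁻¹ * ∑' n : ℕ, convPow μ n x⁻¹ * r^n := by
  have hg : ∀ z : G, Summable (fun n : ℕ => convPow μ n z * r^n) := fun z =>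
    summable_g hprob hirr hρ z hr0.le hrρ
  have hsμx : Summable (fun y : G => μ (x⁻¹*y)) := by
    have := (Equiv.mulLeft x⁻¹).summable_iff.mpr (summable_mu hprob)
    exact this
  have hsy : ∀ n : ℕ, Summable (fun y : G => μ (x⁻¹*y) * convPow μ n y⁻¹) := fun n =>
    Summable.of_nonneg_of_le
      (fun y => mul_nonneg (hprob.1 _) (convPow_nonneg hprob.1 _ _))
      (fun y => mul_le_of_le_one_right (hprob.1 _) (convPow_le_one hprob n _)) hsμx
  have hid : ∀ n : ℕ, ∑' y : G, μ (x⁻¹*y) * convPow μ n y⁻¹ = convPow μ (n+1) x⁻¹ := by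
    intro n
    have he := Equiv.tsum_eq (Equiv.mulLeft x) (fun y => μ (x⁻¹*y) * convPow μ n y⁻¹)
    rw [← he]
    simp only [convPow, Equiv.coe_mulLeft, inv_mul_cancel_left, mul_inv_rev]
  have hterm : ∀ n : ℕ, ∑ y ∈ F, μ (x⁻¹*y) * (convPow μ n y⁻¹ * r^n)
      ≤ convPow μ (n+1) x⁻¹ * r^n := by
    intro n
    have heq : ∑ y ∈ F, μ (x⁻¹*y) * (convPow μ n y⁻¹ * r^n)
        = (∑ y ∈ F, μ (x⁻¹*y) * convPow μ n y⁻¹) * r^n := by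
      rw [Finset.sum_mul]
      exact Finset.sum_congr rfl fun y _ => by ring
    rw [heq]
    refine mul_le_mul_of_nonneg_right ?_ (pow_nonneg hr0.le n)
    rw [← hid n]
    exact Summable.sum_le_tsum F (fun y _ => mul_nonneg (hprob.1 _) (convPow_nonneg hprob.1 _ _)) (hsy n)
  have hsR : Summable (fun n : ℕ => convPow μ (n+1) x⁻¹ * r^n) :=
    summable_shift hprob hirr hρ x⁻¹ hr0.le hrρ
  calc ∑ y ∈ F, μ (x⁻¹*y) * (∑' n : ℕ, convPow μ n y⁻¹ * r^n)
      = ∑ y ∈ F, ∑' n : ℕ, μ (x⁻¹*y) * (convPow μ n y⁻¹ * r^n) :=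
        Finset.sum_congr rfl fun y _ => (tsum_mul_left).symm
    _ = ∑' n : ℕ, ∑ y ∈ F, μ (x⁻¹*y) * (convPow μ n y⁻¹ * r^n) :=
        (Summable.tsum_finsetSum (fun y _ => (hg y⁻¹).mul_left _)).symm
    _ ≤ ∑' n : ℕ, convPow μ (n+1) x⁻¹ * r^n := by
        refine Summable.tsum_le_tsum hterm ?_ hsR
        refine Summable.of_nonneg_of_le (fun n => ?_) hterm hsR
        exact Finset.sum_nonneg fun y _ => mul_nonneg (hprob.1 _)
          (mul_nonneg (convPow_nonneg hprob.1 _ _) (pow_nonneg hr0.le _))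
    _ ≤ r⁻¹ * ∑' n : ℕ, convPow μ n x⁻¹ * r^n := by
        have h0 : (0:ℝ) ≤ convPow μ 0 x⁻¹ * r^0 :=
          mul_nonneg (convPow_nonneg hprob.1 _ _) (pow_nonneg hr0.le _)
        have h1 : (∑' n : ℕ, convPow μ (n+1) x⁻¹ * r^n) * r
            ≤ ∑' n : ℕ, convPow μ n x⁻¹ * r^n := by
          rw [← tsum_mul_right]
          have heq := Summable.tsum_eq_zero_add (hg x⁻¹)
          calc ∑' n : ℕ, convPow μ (n+1) x⁻¹ * r^n * r
              = ∑' n : ℕ, convPow μ (n+1) x⁻¹ * r^(n+1) := by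
                congr 1; funext n; rw [pow_succ]; ring
            _ ≤ convPow μ 0 x⁻¹ * r^0 + ∑' n : ℕ, convPow μ (n+1) x⁻¹ * r^(n+1) :=
                le_add_of_nonneg_left h0
            _ = ∑' n : ℕ, convPow μ n x⁻¹ * r^n := heq.symm
        calc (∑' n : ℕ, convPow μ (n+1) x⁻¹ * r^n)
            = r⁻¹ * ((∑' n : ℕ, convPow μ (n+1) x⁻¹ * r^n) * r) := by
              rw [mul_comm, mul_assoc, mul_inv_cancel₀ hr0.ne', mul_one]
          _ ≤ r⁻¹ * ∑' n : ℕ, convPow μ n x⁻¹ * r^n :=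
              mul_le_mul_of_nonneg_left h1 (by positivity)

end core

/-- there exists a positive `ρ(μ)`-subharmonic function
`h : Γ → (0,∞)`, i.e. `∑_y μ(x⁻¹y) h(y) ≤ ρ(μ) h(x)` for every `x`. -/
theorem stmt10 {G : Type*} [Group G] [Countable G] (μ : G → ℝ) (ρ : ℝ)
    (hprob : IsProbMeas μ) (hirr : IsIrreducibleMeas μ)
    (hρ : ρ = Filter.limsup (fun n : ℕ => (convPow μ n 1) ^ ((n : ℝ)⁻¹)) Filter.atTop) :
    ∃ h : G → ℝ, (∀ x, 0 < h x) ∧ ∀ x : G, ∑' y : G, μ (x⁻¹ * y) * h y ≤ ρ * h x := by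
  classical
  have hρ0 : 0 < ρ := rho_pos hprob hirr hρ
  -- the increasing radii r k ↑ ρ⁻¹
  set r : ℕ → ℝ := fun k => ρ⁻¹ * (((k:ℝ)+1)/((k:ℝ)+2)) with hrdef
  have hr_pos : ∀ k, 0 < r k := fun k => by
    have h1 : (0:ℝ) < (k:ℝ)+1 := by positivity
    have h2 : (0:ℝ) < (k:ℝ)+2 := by positivity
    simp only [hrdef]; positivity
  have hr_lt : ∀ k, r k * ρ < 1 := fun k => by
    have h2 : (0:ℝ) < (k:ℝ)+2 := by positivity
    have heq : r k * ρ = ((k:ℝ)+1)/((k:ℝ)+2) := by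
      simp only [hrdef]
      rw [mul_comm, ← mul_assoc, mul_inv_cancel₀ hρ0.ne', one_mul]
    rw [heq, div_lt_one h2]; linarith
  have hr_ge : ∀ k, ρ⁻¹/2 ≤ r k := fun k => by
    have h2 : (0:ℝ) < (k:ℝ)+2 := by positivity
    have h1 : (1:ℝ)/2 ≤ ((k:ℝ)+1)/((k:ℝ)+2) := by
      rw [div_le_div_iff₀ (by norm_num) h2]; linarith
    calc ρ⁻¹/2 = ρ⁻¹ * (1/2) := by ring
      _ ≤ ρ⁻¹ * (((k:ℝ)+1)/((k:ℝ)+2)) := mul_le_mul_of_nonneg_left h1 (by positivity)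
  have hrinv : Filter.Tendsto (fun k : ℕ => (r k)⁻¹) atTop (nhds ρ) := by
    have heq : ∀ k : ℕ, (r k)⁻¹ = ρ * (1 + 1/((k:ℝ)+1)) := fun k => by
      have h1 : ((k:ℝ)+1) ≠ 0 := by positivity
      have h2 : ((k:ℝ)+2) ≠ 0 := by positivity
      simp only [hrdef]
      refine inv_eq_of_mul_eq_one_right ?_
      field_simp
      ring
    have h0 : Filter.Tendsto (fun k:ℕ => 1 + 1/((k:ℝ)+1)) atTop (nhds 1) := by
      have := tendsto_one_div_add_atTop_nhds_zero_nat (𝕜 := ℝ)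
      simpa using tendsto_const_nhds.add this
    have h1 := h0.const_mul ρ
    rw [mul_one] at h1
    exact h1.congr (fun k => (heq k).symm)
  -- Green functions
  set g : ℕ → G → ℝ := fun k z => ∑' n : ℕ, convPow μ n z * (r k)^n with hgdef
  have hg_sum : ∀ k z, Summable (fun n : ℕ => convPow μ n z * (r k)^n) := fun k z =>
    summable_g hprob hirr hρ z (hr_pos k).le (hr_lt k)
  have hg_nonneg : ∀ k z, 0 ≤ g k z := fun k z =>
    tsum_nonneg fun n => mul_nonneg (convPow_nonneg hprob.1 _ _) (pow_nonneg (hr_pos k).le _)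
  have hg1 : ∀ k, 1 ≤ g k 1 := fun k => by
    have := Summable.le_tsum (hg_sum k 1) 0
      (fun n _ => mul_nonneg (convPow_nonneg hprob.1 _ _) (pow_nonneg (hr_pos k).le _))
    simpa [convPow] using this
  have hg1pos : ∀ k, 0 < g k 1 := fun k => lt_of_lt_of_le one_pos (hg1 k)
  -- exponents from irreducibility
  choose m hm0 hmmem using fun x : G => hirr x
  have hcp : ∀ x : G, 0 < convPow μ (m x) x := fun x => pos_of_mem_pow hprob _ _ (hmmem x)
  -- normalized functions and Harnack bounds
  set u : ℕ → G → ℝ := fun k x => g k x⁻¹ / g k 1 with hudef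
  set c : G → ℝ := fun x => (ρ⁻¹/2)^(m x⁻¹) * convPow μ (m x⁻¹) x⁻¹ with hcdef
  set C : G → ℝ := fun x => ((ρ⁻¹/2)^(m x) * convPow μ (m x) x)⁻¹ with hCdef
  have hcpos : ∀ x, 0 < c x := fun x => by
    have h1 := hcp x⁻¹
    have h2 : (0:ℝ) < ρ⁻¹/2 := by positivity
    exact mul_pos (pow_pos h2 _) h1
  have hpow_le : ∀ k (mm : ℕ), (ρ⁻¹/2)^mm ≤ (r k)^mm := fun k mm =>
    pow_le_pow_left₀ (by positivity) (hr_ge k) mm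
  have hlow : ∀ k x, c x ≤ u k x := by
    intro k x
    have hh := harnack hprob hirr hρ x⁻¹ 1 (m x⁻¹) (hr_pos k).le (hr_lt k)
    rw [mul_one] at hh
    have h1 : c x * g k 1 ≤ g k x⁻¹ := by
      refine le_trans ?_ hh
      have hle := hpow_le k (m x⁻¹)
      have hnn : (0:ℝ) ≤ convPow μ (m x⁻¹) x⁻¹ * g k 1 :=
        mul_nonneg (convPow_nonneg hprob.1 _ _) (hg_nonneg k 1)
      calc c x * g k 1
          = (ρ⁻¹/2)^(m x⁻¹) * (convPow μ (m x⁻¹) x⁻¹ * g k 1) := by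
            simp only [hcdef]; ring
        _ ≤ (r k)^(m x⁻¹) * (convPow μ (m x⁻¹) x⁻¹ * g k 1) :=
            mul_le_mul_of_nonneg_right hle hnn
        _ = convPow μ (m x⁻¹) x⁻¹ * (r k)^(m x⁻¹) * g k 1 := by ring
    simp only [hudef]
    rw [le_div_iff₀ (hg1pos k)]
    exact h1
  have hupp : ∀ k x, u k x ≤ C x := by
    intro k x
    have hh := harnack hprob hirr hρ x x⁻¹ (m x) (hr_pos k).le (hr_lt k)
    rw [mul_inv_cancel] at hh
    have hd : 0 < (ρ⁻¹/2)^(m x) * convPow μ (m x) x :=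
      mul_pos (pow_pos (by positivity) _) (hcp x)
    have h2 : (ρ⁻¹/2)^(m x) * convPow μ (m x) x * g k x⁻¹ ≤ g k 1 := by
      refine le_trans ?_ hh
      have hle := hpow_le k (m x)
      have hnn : (0:ℝ) ≤ convPow μ (m x) x * g k x⁻¹ :=
        mul_nonneg (convPow_nonneg hprob.1 _ _) (hg_nonneg k x⁻¹)
      calc (ρ⁻¹/2)^(m x) * convPow μ (m x) x * g k x⁻¹
          = (ρ⁻¹/2)^(m x) * (convPow μ (m x) x * g k x⁻¹) := by ring
        _ ≤ (r k)^(m x) * (convPow μ (m x) x * g k x⁻¹) :=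
            mul_le_mul_of_nonneg_right hle hnn
        _ = convPow μ (m x) x * (r k)^(m x) * g k x⁻¹ := by ring
    simp only [hudef, hCdef]
    rw [div_le_iff₀ (hg1pos k)]
    calc g k x⁻¹
        = ((ρ⁻¹/2)^(m x) * convPow μ (m x) x)⁻¹
            * ((ρ⁻¹/2)^(m x) * convPow μ (m x) x * g k x⁻¹) := by
          rw [← mul_assoc, inv_mul_cancel₀ hd.ne', one_mul]
      _ ≤ ((ρ⁻¹/2)^(m x) * convPow μ (m x) x)⁻¹ * g k 1 :=
          mul_le_mul_of_nonneg_left h2 (inv_nonneg.mpr hd.le)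
  -- ultrafilter limit
  let U : Ultrafilter ℕ := Ultrafilter.of atTop
  have hU : (U : Filter ℕ) ≤ atTop := Ultrafilter.of_le _
  have hlim : ∀ x : G, ∃ L : ℝ, c x ≤ L ∧
      Filter.Tendsto (fun k => u k x) (U : Filter ℕ) (nhds L) := by
    intro x
    have hmap : (Ultrafilter.map (fun k => u k x) U : Filter ℝ)
        ≤ Filter.principal (Set.Icc (c x) (C x)) := by
      rw [Ultrafilter.coe_map, Filter.le_principal_iff, Filter.mem_map]
      exact Filter.univ_mem' (fun k => ⟨hlow k x, hupp k x⟩)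
    obtain ⟨L, hL, hle⟩ := (isCompact_Icc).ultrafilter_le_nhds _ hmap
    refine ⟨L, hL.1, ?_⟩
    rwa [Filter.Tendsto, ← Ultrafilter.coe_map]
  choose h hc htend using hlim
  have hhpos : ∀ x, 0 < h x := fun x => lt_of_lt_of_le (hcpos x) (hc x)
  refine ⟨h, hhpos, fun x => ?_⟩
  have key : ∀ F : Finset G, ∑ y ∈ F, μ (x⁻¹*y) * h y ≤ ρ * h x := by
    intro F
    have t1 : Filter.Tendsto (fun k => ∑ y ∈ F, μ (x⁻¹*y) * u k y) (U : Filter ℕ)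
        (nhds (∑ y ∈ F, μ (x⁻¹*y) * h y)) :=
      tendsto_finset_sum F (fun y _ => (htend y).const_mul _)
    have t2 : Filter.Tendsto (fun k => (r k)⁻¹ * u k x) (U : Filter ℕ)
        (nhds (ρ * h x)) := (hrinv.mono_left hU).mul (htend x)
    refine le_of_tendsto_of_tendsto' t1 t2 (fun k => ?_)
    have hcore := core hprob hirr hρ x (hr_pos k) (hr_lt k) F
    have heq1 : ∑ y ∈ F, μ (x⁻¹*y) * u k y
        = (∑ y ∈ F, μ (x⁻¹*y) * g k y⁻¹) / g k 1 := by
      rw [Finset.sum_div]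
      exact Finset.sum_congr rfl fun y _ => by simp only [hudef]; rw [mul_div_assoc]
    have heq2 : (r k)⁻¹ * u k x = (r k)⁻¹ * g k x⁻¹ / g k 1 := by
      simp only [hudef]; rw [mul_div_assoc]
    rw [heq1, heq2, div_le_div_iff₀ (hg1pos k) (hg1pos k)]
    refine mul_le_mul_of_nonneg_right ?_ (hg_nonneg k 1)
    simp only [hgdef]
    exact hcore
  exact tsum_le_of_sum_le' (mul_nonneg hρ0.le (hhpos x).le) key
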